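/- Let a̲ ∈ [0,1) and A = [a̲,1]. Let u : A → ℝ be twice continuously differentiable with u' > 0 and u'' < 0 on A. Let c₀ = 1 − e^{−rΔ} with r, Δ > 0, let C ≥ 0, I_k ≥ 0, I_u ≥ 0 be constants, and let a_I ∈ A. Define g(x) = c₀·u(x) − C·(a_I·I_k + x·I_u)·x for x ∈ A, and for a fixed a* ∈ A define f(x) = c₀·u(x) − C·(a_I·I_k + a*·I_u)·x. Assume a* maximizes f over A and let a† be the unique maximizer of the strictly concave function g over A. Then a*/2 ≤ a† ≤ a*. -/

import Mathlib

/-- First-order condition: if `φ` attains its max over `Icc a0 1` at `p`, has derivative `d`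
within the interval at `p`, and `q` is in the interval, then `d * (q - p) ≤ 0`. -/
lemma foc_aux {φ : ℝ → ℝ} {d a0 p q : ℝ} (hp : p ∈ Set.Icc a0 1) (hq : q ∈ Set.Icc a0 1)
    (hmax : ∀ x ∈ Set.Icc a0 1, φ x ≤ φ p)
    (hd : HasDerivWithinAt φ d (Set.Icc a0 1) p) : d * (q - p) ≤ 0 := by
  have hmax' : IsMaxOn φ (Set.Icc a0 1) p := fun x hx => hmax x hx
  have hcone : q - p ∈ posTangentConeAt (Set.Icc a0 1) p :=
    sub_mem_posTangentConeAt_of_segment_subset ((convex_Icc _ _).segment_subset hp hq)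
  have := hmax'.localize.hasFDerivWithinAt_nonpos hd.hasFDerivWithinAt hcone
  simpa [mul_comm, smul_eq_mul] using this

theorem stmt_11 (a0 : ℝ) (ha0 : a0 ∈ Set.Ico (0:ℝ) 1)
    (u u' u'' : ℝ → ℝ)
    (hderiv : ∀ x ∈ Set.Icc a0 1, HasDerivWithinAt u (u' x) (Set.Icc a0 1) x)
    (hderiv2 : ∀ x ∈ Set.Icc a0 1, HasDerivWithinAt u' (u'' x) (Set.Icc a0 1) x)
    (hu''cont : ContinuousOn u'' (Set.Icc a0 1))
    (hu'pos : ∀ x ∈ Set.Icc a0 1, 0 < u' x)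
    (hu''neg : ∀ x ∈ Set.Icc a0 1, u'' x < 0)
    (r Δ C Ik Iu aI : ℝ) (hr : 0 < r) (hΔ : 0 < Δ) (hC : 0 ≤ C)
    (hIk : 0 ≤ Ik) (hIu : 0 ≤ Iu) (haI : aI ∈ Set.Icc a0 1)
    (astar adag : ℝ) (hastar : astar ∈ Set.Icc a0 1) (hadag : adag ∈ Set.Icc a0 1)
    -- `a*` maximizes `f(x) = c₀ u(x) - C(a_I I_k + a* I_u)x` over `A`
    (hf : ∀ x ∈ Set.Icc a0 1,
      (1 - Real.exp (-(r*Δ))) * u x - C * (aI*Ik + astar*Iu) * x ≤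
      (1 - Real.exp (-(r*Δ))) * u astar - C * (aI*Ik + astar*Iu) * astar)
    -- `a†` maximizes `g(x) = c₀ u(x) - C(a_I I_k + x I_u)x` over `A`
    (hg : ∀ x ∈ Set.Icc a0 1,
      (1 - Real.exp (-(r*Δ))) * u x - C * (aI*Ik + x*Iu) * x ≤
      (1 - Real.exp (-(r*Δ))) * u adag - C * (aI*Ik + adag*Iu) * adag)
    -- and `a†` is the unique such maximizer
    (hg_unique : ∀ x ∈ Set.Icc a0 1,
      (∀ y ∈ Set.Icc a0 1,
        (1 - Real.exp (-(r*Δ))) * u y - C * (aI*Ik + y*Iu) * y ≤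
        (1 - Real.exp (-(r*Δ))) * u x - C * (aI*Ik + x*Iu) * x) → x = adag) :
    astar / 2 ≤ adag ∧ adag ≤ astar := by
  obtain ⟨ha0' , ha01⟩ := ha0
  obtain ⟨hastar0, hastar1⟩ := hastar
  obtain ⟨hadag0, hadag1⟩ := hadag
  set c0 : ℝ := 1 - Real.exp (-(r*Δ)) with hc0def
  have hc0 : 0 < c0 := by
    have : Real.exp (-(r*Δ)) < 1 := by
      rw [Real.exp_lt_one_iff]
      nlinarith
    linarith
  set m : ℝ := C * Iu with hmdef
  have hm : 0 ≤ m := mul_nonneg hC hIu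
  rcases eq_or_lt_of_le hm with hm0 | hmpos
  · -- m = 0: f = g, so astar = adag
    have heq : astar = adag := by
      apply hg_unique astar ⟨hastar0, hastar1⟩
      intro y hy
      have hmm : C * Iu = 0 := hm0.symm
      have e1 : C*(aI*Ik + y*Iu)*y = C*(aI*Ik + astar*Iu)*y := by
        linear_combination (y*y - astar*y) * hmm
      have := hf y hy
      linarith [this, e1]
    constructor
    · rw [← heq]; linarith
    · rw [← heq]
  · -- m > 0
    have hupper : adag ≤ astar := by
      by_contra hcon
      push_neg at hcon
      have h1 := hf adag ⟨hadag0, hadag1⟩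
      have h2 := hg astar ⟨hastar0, hastar1⟩
      -- m * adag * (astar - adag) ≥ 0
      have hkey : 0 ≤ m * adag * (astar - adag) := by nlinarith
      have hadagpos : 0 < adag := by linarith
      nlinarith [mul_pos (mul_pos hmpos hadagpos) (sub_pos.2 hcon), hkey]
    refine ⟨?_, hupper⟩
    by_contra hcon
    push_neg at hcon
    have hastarpos : adag < astar := by linarith
    have hastar_gt : a0 < astar := lt_of_le_of_lt hadag0 hastarpos
    have hadag_lt1 : adag < 1 := lt_of_lt_of_le hastarpos hastar1
    set k : ℝ := C * (aI * Ik) with hkdef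
    -- FOC for f at astar, test point a0
    have hdf : HasDerivWithinAt (fun x => c0 * u x - C * (aI*Ik + astar*Iu) * x)
        (c0 * u' astar - C * (aI*Ik + astar*Iu)) (Set.Icc a0 1) astar := by
      exact ((hderiv astar ⟨hastar0, hastar1⟩).const_mul c0).sub
        (((hasDerivWithinAt_id astar (Set.Icc a0 1)).const_mul
          (C * (aI*Ik + astar*Iu))).congr_deriv (by ring))
    have hfoc1 : (c0 * u' astar - C * (aI*Ik + astar*Iu)) * (a0 - astar) ≤ 0 :=
      foc_aux ⟨hastar0, hastar1⟩ ⟨le_refl a0, le_of_lt ha01⟩ (fun x hx => hf x hx) hdf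
    have hf1 : 0 ≤ c0 * u' astar - C * (aI*Ik + astar*Iu) := by
      rcases le_or_gt (c0 * u' astar - C * (aI*Ik + astar*Iu)) 0 with h | h
      · nlinarith
      · linarith
    -- FOC for g at adag, test point 1
    have hdg : HasDerivWithinAt (fun x => c0 * u x - C * (aI*Ik + x*Iu) * x)
        (c0 * u' adag - (k + 2 * m * adag)) (Set.Icc a0 1) adag := by
      have h1 : HasDerivWithinAt (fun x : ℝ => C * (aI*Ik + x*Iu) * x)
          (k + 2 * m * adag) (Set.Icc a0 1) adag := by
        have := ((hasDerivWithinAt_id adag (Set.Icc a0 1)).const_mul Iu)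
        have hpoly : HasDerivWithinAt (fun x : ℝ => k * x + m * (x * x))
            (k + 2 * m * adag) (Set.Icc a0 1) adag := by
          have hx : HasDerivWithinAt (fun x : ℝ => x) 1 (Set.Icc a0 1) adag :=
            hasDerivWithinAt_id adag _
          have hsq : HasDerivWithinAt (fun x : ℝ => x * x) (1 * adag + adag * 1)
              (Set.Icc a0 1) adag := hx.mul hx
          have := ((hx.const_mul k).add (hsq.const_mul m))
          exact this.congr_deriv (by ring)
        refine hpoly.congr (fun x _ => by ring) (by ring)
      exact ((hderiv adag ⟨hadag0, hadag1⟩).const_mul c0).sub h1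
    have hfoc2 : (c0 * u' adag - (k + 2 * m * adag)) * (1 - adag) ≤ 0 :=
      foc_aux ⟨hadag0, hadag1⟩ ⟨le_of_lt ha01, le_refl 1⟩
        (fun x hx => hg x hx) hdg
    have hg1 : c0 * u' adag - (k + 2 * m * adag) ≤ 0 := by
      rcases le_or_gt (c0 * u' adag - (k + 2 * m * adag)) 0 with h | h
      · exact h
      · nlinarith
    -- u' is strictly decreasing
    have hanti : StrictAntiOn u' (Set.Icc a0 1) := by
      apply strictAntiOn_of_hasDerivWithinAt_neg (convex_Icc a0 1)
        (fun x hx => ((hderiv2 x hx).differentiableWithinAt).continuousWithinAt)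
        (fun x hx => (hderiv2 x (interior_subset hx)).mono interior_subset)
        (fun x hx => hu''neg x (interior_subset hx))
    have hlt : u' astar < u' adag := hanti ⟨hadag0, hadag1⟩ ⟨hastar0, hastar1⟩ hastarpos
    -- combine: c0 u'(astar) ≥ k + m astar > k + 2 m adag ≥ c0 u'(adag)
    have hchain : k + 2 * m * adag < k + m * astar := by nlinarith
    have h1 : k + m * astar ≤ c0 * u' astar := by
      have : C * (aI*Ik + astar*Iu) = k + m * astar := by ring
      linarith [hf1, this ▸ hf1]
    nlinarith
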